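/- Kingman-type inequality for matrices: let F, G ∈ R_+^{n×n} be nonnegative matrices with positive eigenvectors u, v > 0 (F u = ρ_F u, G v = ρ_G v), and let α, β > 0 with α+β=1. Then the matrix H with h_{ij} = f_{ij}^α g_{ij}^β satisfies H x ≤ ρ_F^α ρ_G^β x componentwise, where x_i = u_i^α v_i^β; consequently, if H has a nonnegative eigenvector with eigenvalue ρ_H (e.g. its Perron root), then ρ_H ≤ ρ_F^α ρ_G^β. -/

import Mathlib

/-- Kingman-type inequality for nonnegative matrices: if `F u = ρ_F u`,
`G v = ρ_G v` with `u, v > 0`, `α, β > 0`, `α + β = 1`, then the matrix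
`H = F^{∘α} ∘ G^{∘β}` satisfies `H x ≤ ρ_F^α ρ_G^β x` componentwise for
`x = u^{∘α} ∘ v^{∘β}`; consequently every eigenvalue of `H` with a nonnegative
eigenvector is at most `ρ_F^α ρ_G^β`. -/
theorem kingman_matrix_ineq
    (n : ℕ) (F G : Matrix (Fin n) (Fin n) ℝ)
    (hF : ∀ i j, 0 ≤ F i j) (hG : ∀ i j, 0 ≤ G i j)
    (u v : Fin n → ℝ) (hu : ∀ i, 0 < u i) (hv : ∀ i, 0 < v i)
    (ρF ρG : ℝ) (hρF : 0 ≤ ρF) (hρG : 0 ≤ ρG)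
    (hFu : ∀ i, ∑ j, F i j * u j = ρF * u i)
    (hGv : ∀ i, ∑ j, G i j * v j = ρG * v i)
    (α β : ℝ) (hα : 0 < α) (hβ : 0 < β) (hαβ : α + β = 1)
    (H : Matrix (Fin n) (Fin n) ℝ) (hH : ∀ i j, H i j = F i j ^ α * G i j ^ β)
    (x : Fin n → ℝ) (hx : ∀ i, x i = u i ^ α * v i ^ β) :
    (∀ i, ∑ j, H i j * x j ≤ ρF ^ α * ρG ^ β * x i) ∧
    (∀ (ρH : ℝ) (y : Fin n → ℝ), (∀ i, 0 ≤ y i) → y ≠ 0 →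
      (∀ i, ∑ j, H i j * y j = ρH * y i) → ρH ≤ ρF ^ α * ρG ^ β) := by
  have hα1 : α < 1 := by linarith
  have hpq : Real.HolderConjugate α⁻¹ β⁻¹ := by
    constructor
    · rw [inv_inv, inv_inv, inv_one]; exact hαβ
    · exact inv_pos.mpr hα
    · exact inv_pos.mpr hβ
  have hHnn : ∀ i j, 0 ≤ H i j := fun i j => by
    rw [hH]
    exact mul_nonneg (Real.rpow_nonneg (hF i j) α) (Real.rpow_nonneg (hG i j) β)
  have hxpos : ∀ i, 0 < x i := fun i => by
    rw [hx]
    exact mul_pos (Real.rpow_pos_of_pos (hu i) α) (Real.rpow_pos_of_pos (hv i) β)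
  have key : ∀ i, ∑ j, H i j * x j ≤ ρF ^ α * ρG ^ β * x i := by
    intro i
    have h1 : ∑ j, H i j * x j = ∑ j, (F i j * u j) ^ α * (G i j * v j) ^ β := by
      apply Finset.sum_congr rfl
      intro j _
      rw [hH, hx, Real.mul_rpow (hF i j) (hu j).le, Real.mul_rpow (hG i j) (hv j).le]
      ring
    rw [h1]
    have hfnn : ∀ j ∈ Finset.univ, (0:ℝ) ≤ (F i j * u j) ^ α := fun j _ =>
      Real.rpow_nonneg (mul_nonneg (hF i j) (hu j).le) α
    have hgnn : ∀ j ∈ Finset.univ, (0:ℝ) ≤ (G i j * v j) ^ β := fun j _ =>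
      Real.rpow_nonneg (mul_nonneg (hG i j) (hv j).le) β
    have holder := Real.inner_le_Lp_mul_Lq_of_nonneg (s := Finset.univ) hpq hfnn hgnn
    have h2 : ∑ j, ((F i j * u j) ^ α) ^ α⁻¹ = ρF * u i := by
      rw [← hFu i]
      apply Finset.sum_congr rfl
      intro j _
      rw [← Real.rpow_mul (mul_nonneg (hF i j) (hu j).le), mul_inv_cancel₀ hα.ne',
        Real.rpow_one]
    have h3 : ∑ j, ((G i j * v j) ^ β) ^ β⁻¹ = ρG * v i := by
      rw [← hGv i]
      apply Finset.sum_congr rfl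
      intro j _
      rw [← Real.rpow_mul (mul_nonneg (hG i j) (hv j).le), mul_inv_cancel₀ hβ.ne',
        Real.rpow_one]
    calc ∑ j, (F i j * u j) ^ α * (G i j * v j) ^ β
        ≤ (∑ j, ((F i j * u j) ^ α) ^ α⁻¹) ^ (1 / α⁻¹) *
          (∑ j, ((G i j * v j) ^ β) ^ β⁻¹) ^ (1 / β⁻¹) := holder
      _ = (ρF * u i) ^ α * (ρG * v i) ^ β := by
          rw [h2, h3, one_div, inv_inv, one_div, inv_inv]
      _ = ρF ^ α * ρG ^ β * x i := by
          rw [hx, Real.mul_rpow hρF (hu i).le, Real.mul_rpow hρG (hv i).le]; ring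
  refine ⟨key, ?_⟩
  intro ρH y hy hy0 hHy
  obtain ⟨j0, hj0⟩ : ∃ j, y j ≠ 0 := by
    by_contra h
    push_neg at h
    exact hy0 (funext h)
  have hne : (Finset.univ : Finset (Fin n)).Nonempty := ⟨j0, Finset.mem_univ j0⟩
  obtain ⟨i, _, hi⟩ := Finset.exists_max_image Finset.univ (fun k => y k / x k) hne
  set t := y i / x i with ht
  have htpos : 0 < t := by
    have := hi j0 (Finset.mem_univ j0)
    have h0 : 0 < y j0 / x j0 := div_pos (lt_of_le_of_ne (hy j0) (Ne.symm hj0)) (hxpos j0)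
    linarith
  have hylex : ∀ j, y j ≤ t * x j := fun j => by
    have := hi j (Finset.mem_univ j)
    calc y j = y j / x j * x j := (div_mul_cancel₀ (y j) (hxpos j).ne').symm
    _ ≤ t * x j := by exact mul_le_mul_of_nonneg_right this (hxpos j).le
  have hyi : y i = t * x i := by
    rw [ht]; exact (div_mul_cancel₀ (y i) (hxpos i).ne').symm
  have hmain : ρH * y i ≤ ρF ^ α * ρG ^ β * (t * x i) := by
    rw [← hHy i]
    calc ∑ j, H i j * y j ≤ ∑ j, H i j * (t * x j) := by
          apply Finset.sum_le_sum
          intro j _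
          exact mul_le_mul_of_nonneg_left (hylex j) (hHnn i j)
    _ = t * ∑ j, H i j * x j := by rw [Finset.mul_sum]; apply Finset.sum_congr rfl; intros; ring
    _ ≤ t * (ρF ^ α * ρG ^ β * x i) := by
          exact mul_le_mul_of_nonneg_left (key i) htpos.le
    _ = ρF ^ α * ρG ^ β * (t * x i) := by ring
  rw [hyi] at hmain
  exact le_of_mul_le_mul_right hmain (mul_pos htpos (hxpos i))
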